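/- Let ρ₀(x) = (-1)^{Q(x)}, ρ₁(y) = (-1)^{Q(y)+|y|}, and σ(x) = √2 (-1)^{Q(x)} for |x| even, σ(x) = 0 for |x| odd. Then for all x, y ∈ {0,1}^n: ρ₀(x)ρ₁(y)σ(x+y) = √2 · (-1)^{x·y} when |x+y| is even, and ρ₀(x)ρ₁(y)σ(x+y) = 0 when |x+y| is odd. -/
import Mathlib


open Finset Real

/-- numeric value of a bit -/
def bit (b : Bool) : ℕ := if b then 1 else 0

/-- quadratic function Q(x) = Σ_{i<j} x_i x_j -/
def Q {n : ℕ} (x : Fin n → Bool) : ℕ :=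
  ∑ i : Fin n, ∑ j : Fin n, if i < j then bit (x i) * bit (x j) else 0

/-- Hamming weight -/
def wt {n : ℕ} (x : Fin n → Bool) : ℕ := ∑ i : Fin n, bit (x i)

/-- inner product (before reduction mod 2) -/
def ip {n : ℕ} (x y : Fin n → Bool) : ℕ := ∑ i : Fin n, bit (x i) * bit (y i)

/-- bitwise XOR -/
def xorv {n : ℕ} (x y : Fin n → Bool) : Fin n → Bool := fun i => xor (x i) (y i)

noncomputable def σeven {n : ℕ} (x : Fin n → Bool) : ℝ :=
  if Even (wt x) then Real.sqrt 2 * (-1 : ℝ) ^ (Q x) else 0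

lemma two_Q_add_wt {n : ℕ} (x : Fin n → Bool) : 2 * Q x + wt x = wt x * wt x := by
  have hpt : ∀ i j : Fin n, bit (x i) * bit (x j) =
      (if i < j then bit (x i) * bit (x j) else 0) +
      ((if j < i then bit (x j) * bit (x i) else 0) +
      (if i = j then bit (x i) else 0)) := by
    intro i j
    rcases lt_trichotomy i j with h | h | h
    · simp [h, not_lt_of_gt h, h.ne]
    · subst h; simp [lt_irrefl]
      cases x i <;> simp [bit]
    · simp [h, not_lt_of_gt h, h.ne', Nat.mul_comm]
  have hQ2 : (∑ i : Fin n, ∑ j : Fin n, if j < i then bit (x j) * bit (x i) else 0) = Q x := by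
    rw [Finset.sum_comm]; rfl
  have hdiag : (∑ i : Fin n, ∑ j : Fin n, if i = j then bit (x i) else 0) = wt x := by
    simp [wt]
  calc 2 * Q x + wt x
      = Q x + ((∑ i : Fin n, ∑ j : Fin n, if j < i then bit (x j) * bit (x i) else 0)
        + (∑ i : Fin n, ∑ j : Fin n, if i = j then bit (x i) else 0)) := by
        rw [hQ2, hdiag]; ring
    _ = ∑ i : Fin n, ∑ j : Fin n, bit (x i) * bit (x j) := by
        simp only [Q, ← Finset.sum_add_distrib]
        exact Finset.sum_congr rfl fun i _ => Finset.sum_congr rfl fun j _ => (hpt i j).symm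
    _ = wt x * wt x := by
        rw [wt, Finset.sum_mul_sum]

lemma wt_xor_add {n : ℕ} (x y : Fin n → Bool) :
    wt (xorv x y) + 2 * ip x y = wt x + wt y := by
  have : ∀ i : Fin n, bit (xor (x i) (y i)) + 2 * (bit (x i) * bit (y i))
      = bit (x i) + bit (y i) := by
    intro i; cases x i <;> cases y i <;> simp [bit]
  simp only [wt, ip, xorv, Finset.mul_sum, ← Finset.sum_add_distrib]
  exact Finset.sum_congr rfl fun i _ => this i

lemma key (A B S K qx qy qs m : ℤ) (h1 : 2 * qx = A * A - A) (h2 : 2 * qy = B * B - B)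
    (h3 : 2 * qs = S * S - S) (h4 : S + 2 * K = A + B) (h5 : A + B = m + m) :
    Even (qx + qy + B + qs + K) := by
  have hB : B = 2 * m - A := by omega
  have hS : S = 2 * m - 2 * K := by omega
  subst hB hS
  refine ⟨qx + m * m - m * A + (m - K) * (m - K) + K, ?_⟩
  have hd : 2 * (qx + qy + (2 * m - A) + qs + K)
      = 4 * (qx + m * m - m * A + (m - K) * (m - K) + K) := by
    linear_combination (-1 : ℤ) * h1 + h2 + h3
  linarith

theorem rho_sigma_even {n : ℕ} (x y : Fin n → Bool) :
    (Even (wt (xorv x y)) →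
      ((-1 : ℝ) ^ (Q x)) * ((-1 : ℝ) ^ (Q y + wt y)) * σeven (xorv x y)
        = Real.sqrt 2 * (-1 : ℝ) ^ (ip x y)) ∧
    (Odd (wt (xorv x y)) →
      ((-1 : ℝ) ^ (Q x)) * ((-1 : ℝ) ^ (Q y + wt y)) * σeven (xorv x y) = 0) := by
  constructor
  · intro he
    have hx := two_Q_add_wt x
    have hy := two_Q_add_wt y
    have hs := two_Q_add_wt (xorv x y)
    have hw := wt_xor_add x y
    have h1 : 2 * (Q x : ℤ) = (wt x : ℤ) * wt x - wt x := by
      have := congrArg (Nat.cast (R := ℤ)) hx; push_cast at this; linarith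
    have h2 : 2 * (Q y : ℤ) = (wt y : ℤ) * wt y - wt y := by
      have := congrArg (Nat.cast (R := ℤ)) hy; push_cast at this; linarith
    have h3 : 2 * (Q (xorv x y) : ℤ) = (wt (xorv x y) : ℤ) * wt (xorv x y) - wt (xorv x y) := by
      have := congrArg (Nat.cast (R := ℤ)) hs; push_cast at this; linarith
    have h4 : (wt (xorv x y) : ℤ) + 2 * ip x y = wt x + wt y := by
      have := congrArg (Nat.cast (R := ℤ)) hw; push_cast at this; linarith
    have h5 : ∃ m : ℤ, (wt x : ℤ) + wt y = m + m := by
      obtain ⟨m, hm⟩ := he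
      have hm' : (wt (xorv x y) : ℤ) = m + m := by exact_mod_cast hm
      exact ⟨(m : ℤ) + ip x y, by omega⟩
    obtain ⟨m, h5⟩ := h5
    have hev : Even ((Q x : ℤ) + Q y + wt y + Q (xorv x y) + ip x y) :=
      key (wt x) (wt y) (wt (xorv x y)) (ip x y) (Q x) (Q y) (Q (xorv x y)) m h1 h2 h3 h4 h5
    have hevN : Even (Q x + (Q y + wt y) + Q (xorv x y) + ip x y) := by
      have h6 : Even ((Q x + (Q y + wt y) + Q (xorv x y) + ip x y : ℕ) : ℤ) := by
        push_cast; convert hev using 1; ring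
      exact_mod_cast h6
    have hpow : ((-1 : ℝ)) ^ (Q x + (Q y + wt y) + Q (xorv x y) + ip x y) = 1 :=
      hevN.neg_one_pow
    rw [σeven, if_pos he]
    have hsq : ((-1 : ℝ)) ^ (ip x y) * ((-1 : ℝ)) ^ (ip x y) = 1 := by
      rw [← pow_add]; exact (Even.add_self (ip x y)).neg_one_pow
    calc ((-1 : ℝ) ^ (Q x)) * ((-1 : ℝ) ^ (Q y + wt y)) * (Real.sqrt 2 * (-1 : ℝ) ^ Q (xorv x y))
        = Real.sqrt 2 * (((-1 : ℝ)) ^ (Q x + (Q y + wt y) + Q (xorv x y))) := by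
          rw [pow_add, pow_add]; ring
      _ = Real.sqrt 2 * ((((-1 : ℝ)) ^ (Q x + (Q y + wt y) + Q (xorv x y)))
            * (((-1 : ℝ)) ^ (ip x y) * ((-1 : ℝ)) ^ (ip x y))) := by rw [hsq, mul_one]
      _ = Real.sqrt 2 * ((((-1 : ℝ)) ^ (Q x + (Q y + wt y) + Q (xorv x y) + ip x y))
            * ((-1 : ℝ)) ^ (ip x y)) := by rw [pow_add]; ring
      _ = Real.sqrt 2 * (-1 : ℝ) ^ (ip x y) := by rw [hpow, one_mul]
  · intro ho
    rw [σeven, if_neg (Nat.not_even_iff_odd.mpr ho), mul_zero]
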